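/- Let A, B Ōłł GL(2,ŌäØ) with A hyperbolic, and suppose e_A is the most contracted unit direction of A and e_{BA} that of BA (both hyperbolic). If âBAe_Aâ Ōēż âBAâ/ŌłÜ2, then tan |Ōł (e_A, e_{BA})| Ōēż ŌłÜ2 · âBAe_Aâ / âBAâ Ōēż ŌłÜ2 · âBâ·âBâ╗┬╣â / (âAâ·âAâ╗┬╣â). -/

import Mathlib

local notation "E2" => EuclideanSpace ℝ (Fin 2)

open scoped InnerProductSpace

private lemma aux_half_le {x y z : ℝ} (h : z * x = y) (hx : 0 < x) (hy : x ≤ 2 * y) :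
    1/2 ≤ z := by nlinarith

private lemma aux_double {a z : ℝ} (ha : 0 ≤ a) (hz : 1/2 ≤ z) : a ≤ 2 * a * z := by
  nlinarith

set_option maxHeartbeats 1600000 in
/-- Comparison of the most contracted directions of `A` and `BA`. -/
theorem angle_contracted_directions (A A' B B' : E2 →L[ℝ] E2)
    (hAA' : A.comp A' = ContinuousLinearMap.id ℝ E2)
    (hA'A : A'.comp A = ContinuousLinearMap.id ℝ E2)
    (hBB' : B.comp B' = ContinuousLinearMap.id ℝ E2)
    (hB'B : B'.comp B = ContinuousLinearMap.id ℝ E2)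
    (hA : 1 < ‖A‖) (hA' : 1 < ‖A'‖)
    (hBA : 1 < ‖B.comp A‖) (hBA' : 1 < ‖A'.comp B'‖)
    (eA eBA : E2) (heA : ‖eA‖ = 1) (heBA : ‖eBA‖ = 1)
    (hceA : ‖A eA‖ = ‖A'‖⁻¹) (hceBA : ‖(B.comp A) eBA‖ = ‖A'.comp B'‖⁻¹)
    (hsmall : ‖(B.comp A) eA‖ ≤ ‖B.comp A‖ / Real.sqrt 2) :
    Real.tan (InnerProductGeometry.angle eA eBA) ≤
        Real.sqrt 2 * ‖(B.comp A) eA‖ / ‖B.comp A‖ ∧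
      Real.sqrt 2 * ‖(B.comp A) eA‖ / ‖B.comp A‖ ≤
        Real.sqrt 2 * (‖B‖ * ‖B'‖) / (‖A‖ * ‖A'‖) := by
  set M : E2 →L[ℝ] E2 := B.comp A with hMdef
  set N : E2 →L[ℝ] E2 := A'.comp B' with hNdef
  have hA'Ax : ∀ x : E2, A' (A x) = x := fun x => by
    have := ContinuousLinearMap.ext_iff.1 hA'A x; simpa using this
  have hB'Bx : ∀ x : E2, B' (B x) = x := fun x => by
    have := ContinuousLinearMap.ext_iff.1 hB'B x; simpa using this
  have hNMx : ∀ x : E2, N (M x) = x := fun x => by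
    show A' (B' (B (A x))) = x
    rw [hB'Bx, hA'Ax]
  have hM0 : (0:ℝ) < ‖M‖ := lt_trans one_pos hBA
  have hN0 : (0:ℝ) < ‖N‖ := lt_trans one_pos hBA'
  have hA0 : (0:ℝ) < ‖A‖ := lt_trans one_pos hA
  have hA'0 : (0:ℝ) < ‖A'‖ := lt_trans one_pos hA'
  -- minimality of the most contracted direction
  have hmin : ∀ x : E2, ‖N‖⁻¹ * ‖x‖ ≤ ‖M x‖ := by
    intro x
    rw [inv_mul_le_iff₀ hN0]
    calc ‖x‖ = ‖N (M x)‖ := by rw [hNMx x]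
      _ ≤ ‖N‖ * ‖M x‖ := N.le_opNorm (M x)
  set m : ℝ := ‖M eA‖ with hmdef
  have hσ₂m : ‖N‖⁻¹ ≤ m := by
    have := hmin eA; rwa [heA, mul_one] at this
  have hσ₂0 : (0:ℝ) < ‖N‖⁻¹ := inv_pos.2 hN0
  have hm0 : (0:ℝ) < m := lt_of_lt_of_le hσ₂0 hσ₂m
  -- norm of A is controlled
  have hAB : ‖A‖ ≤ ‖B'‖ * ‖M‖ := by
    refine ContinuousLinearMap.opNorm_le_bound _ (by positivity) (fun x => ?_)
    calc ‖A x‖ = ‖B' (M x)‖ := by rw [show M x = B (A x) from rfl, hB'Bx]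
      _ ≤ ‖B'‖ * ‖M x‖ := B'.le_opNorm (M x)
      _ ≤ ‖B'‖ * (‖M‖ * ‖x‖) :=
          mul_le_mul_of_nonneg_left (M.le_opNorm x) (norm_nonneg _)
      _ = ‖B'‖ * ‖M‖ * ‖x‖ := by ring
  have hB'0 : (0:ℝ) < ‖B'‖ := by
    by_contra h
    push_neg at h
    have hB'eq : ‖B'‖ = 0 := le_antisymm h (norm_nonneg _)
    rw [hB'eq, zero_mul] at hAB
    linarith
  have hB0 : (0:ℝ) < ‖B‖ := by
    by_contra h
    push_neg at h
    have hBeq : ‖B‖ = 0 := le_antisymm h (norm_nonneg _)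
    have : ‖M‖ ≤ ‖B‖ * ‖A‖ := ContinuousLinearMap.opNorm_comp_le _ _
    rw [hBeq, zero_mul] at this
    linarith
  have hmB : m * ‖A'‖ ≤ ‖B‖ := by
    have h1 : m ≤ ‖B‖ * ‖A'‖⁻¹ := by
      calc m = ‖B (A eA)‖ := rfl
        _ ≤ ‖B‖ * ‖A eA‖ := B.le_opNorm (A eA)
        _ = ‖B‖ * ‖A'‖⁻¹ := by rw [hceA]
    have := mul_le_mul_of_nonneg_right h1 hA'0.le
    rwa [mul_assoc, inv_mul_cancel₀ hA'0.ne', mul_one] at this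
  have hsqrt2 : (0:ℝ) < Real.sqrt 2 := Real.sqrt_pos.2 (by norm_num)
  -- second inequality
  have hsecond : Real.sqrt 2 * m / ‖M‖ ≤ Real.sqrt 2 * (‖B‖ * ‖B'‖) / (‖A‖ * ‖A'‖) := by
    rw [div_le_div_iff₀ hM0 (by positivity)]
    have key : m * (‖A‖ * ‖A'‖) ≤ ‖B‖ * ‖B'‖ * ‖M‖ := by
      calc m * (‖A‖ * ‖A'‖) = (m * ‖A'‖) * ‖A‖ := by ring
        _ ≤ ‖B‖ * ‖A‖ := mul_le_mul_of_nonneg_right hmB hA0.le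
        _ ≤ ‖B‖ * (‖B'‖ * ‖M‖) := mul_le_mul_of_nonneg_left hAB hB0.le
        _ = ‖B‖ * ‖B'‖ * ‖M‖ := by ring
    calc Real.sqrt 2 * m * (‖A‖ * ‖A'‖) = Real.sqrt 2 * (m * (‖A‖ * ‖A'‖)) := by ring
      _ ≤ Real.sqrt 2 * (‖B‖ * ‖B'‖ * ‖M‖) := mul_le_mul_of_nonneg_left key hsqrt2.le
      _ = Real.sqrt 2 * (‖B‖ * ‖B'‖) * ‖M‖ := by ring
  refine ⟨?_, hsecond⟩
  -- first inequality
  have hRHS : (0:ℝ) ≤ Real.sqrt 2 * m / ‖M‖ := by positivity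
  set θ : ℝ := InnerProductGeometry.angle eA eBA with hθdef
  set c : ℝ := ⟪eA, eBA⟫_ℝ with hcdef
  have hθ0 : 0 ≤ θ := InnerProductGeometry.angle_nonneg _ _
  have hθπ : θ ≤ Real.pi := InnerProductGeometry.angle_le_pi _ _
  have hcos : Real.cos θ = c := by
    rw [hθdef, InnerProductGeometry.cos_angle, heA, heBA, one_mul, div_one, hcdef]
  have hsinθ : Real.sin θ = Real.sqrt (1 - c ^ 2) := by
    rw [Real.sin_eq_sqrt_one_sub_cos_sq hθ0 hθπ, hcos]
  by_cases hc : c ≤ 0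
  · -- the angle is obtuse, its tangent is nonpositive
    have htan : Real.tan θ ≤ 0 := by
      rw [Real.tan_eq_sin_div_cos]
      exact div_nonpos_of_nonneg_of_nonpos
        (Real.sin_nonneg_of_nonneg_of_le_pi hθ0 hθπ) (hcos ▸ hc)
    exact le_trans htan hRHS
  push_neg at hc
  set s : ℝ := Real.sqrt (1 - c ^ 2) with hsdef
  have habs : |c| ≤ 1 := by
    have h1 := abs_real_inner_le_norm eA eBA
    rwa [heA, heBA, mul_one] at h1
  have hc1 : c ≤ 1 := le_trans (le_abs_self c) habs
  have hcsq : c ^ 2 ≤ 1 := (sq_le_one_iff_abs_le_one c).2 habs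
  have hs0 : 0 ≤ s := Real.sqrt_nonneg _
  have hs2 : s ^ 2 = 1 - c ^ 2 := Real.sq_sqrt (by linarith)
  have htan : Real.tan θ = s / c := by
    rw [Real.tan_eq_sin_div_cos, hsinθ, hcos]
  by_cases hs : s = 0
  · rw [htan, hs, zero_div]
    exact hRHS
  have hspos : 0 < s := lt_of_le_of_ne hs0 (Ne.symm hs)
  -- the orthogonal unit vector to eBA in the plane spanned by eA, eBA
  set f : E2 := s⁻¹ • (eA - c • eBA) with hfdef
  have hsf : s • f = eA - c • eBA := by
    rw [hfdef, smul_smul, mul_inv_cancel₀ hs, one_smul]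
  have horth : ⟪eBA, f⟫_ℝ = 0 := by
    have h1 : ⟪eBA, eA - c • eBA⟫_ℝ = 0 := by
      have h2 : ⟪eBA, eA⟫_ℝ = c := by
        rw [hcdef, real_inner_comm]
      rw [inner_sub_right, real_inner_smul_right, real_inner_self_eq_norm_sq, heBA, h2]
      ring
    rw [hfdef, real_inner_smul_right, h1, mul_zero]
  have hnormsub : ‖eA - c • eBA‖ = s := by
    have h1 : ‖eA - c • eBA‖ ^ 2 = s ^ 2 := by
      rw [norm_sub_sq_real, real_inner_smul_right, norm_smul, heA, heBA, hs2]
      simp [Real.norm_eq_abs, ← hcdef, sq_abs]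
      ring
    have h2 := congrArg Real.sqrt h1
    rwa [Real.sqrt_sq (norm_nonneg _), Real.sqrt_sq hs0] at h2
  have hnf : ‖f‖ = 1 := by
    rw [hfdef, norm_smul, hnormsub, Real.norm_eq_abs, abs_of_pos (inv_pos.2 hspos),
      inv_mul_cancel₀ hs]
  have heAdec : eA = c • eBA + s • f := by
    rw [hsf]; abel
  set F : ℝ := ‖M f‖ with hFdef
  have hσ₂F : ‖N‖⁻¹ ≤ F := by
    have := hmin f; rwa [hnf, mul_one] at this
  set b : ℝ := ⟪M eBA, M f⟫_ℝ with hbdef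
  have hMeBA : ‖M eBA‖ = ‖N‖⁻¹ := hceBA
  -- norm expansion for combinations of eBA and f
  have hexp : ∀ α t : ℝ, ‖M (α • eBA + t • f)‖ ^ 2
      = α ^ 2 * (‖N‖⁻¹) ^ 2 + 2 * (α * t) * b + t ^ 2 * F ^ 2 := by
    intro α t
    have h1 : M (α • eBA + t • f) = α • M eBA + t • M f := by
      rw [map_add, map_smul, map_smul]
    rw [h1, norm_add_sq_real, real_inner_smul_left, real_inner_smul_right,
      norm_smul, norm_smul, hMeBA, Real.norm_eq_abs, Real.norm_eq_abs,
      mul_pow, mul_pow, sq_abs, sq_abs, ← hbdef, ← hFdef]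
    ring
  have hunit : ∀ α t : ℝ, α ^ 2 + t ^ 2 = 1 → ‖α • eBA + t • f‖ = 1 := by
    intro α t hαt
    have h1 : ‖α • eBA + t • f‖ ^ 2 = 1 := by
      rw [norm_add_sq_real, real_inner_smul_left, real_inner_smul_right,
        norm_smul, norm_smul, heBA, hnf, Real.norm_eq_abs, Real.norm_eq_abs,
        mul_pow, mul_pow, sq_abs, sq_abs, horth]
      simpa using hαt
    have h2 := congrArg Real.sqrt h1
    rwa [Real.sqrt_sq (norm_nonneg _), Real.sqrt_one] at h2
  have hkey : ∀ α t : ℝ, α ^ 2 + t ^ 2 = 1 →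
      (‖N‖⁻¹) ^ 2 ≤ α ^ 2 * (‖N‖⁻¹) ^ 2 + 2 * (α * t) * b + t ^ 2 * F ^ 2 := by
    intro α t hαt
    have h1 : ‖N‖⁻¹ ≤ ‖M (α • eBA + t • f)‖ := by
      have := hmin (α • eBA + t • f)
      rwa [hunit α t hαt, mul_one] at this
    have h2 : (‖N‖⁻¹) ^ 2 ≤ ‖M (α • eBA + t • f)‖ ^ 2 :=
      pow_le_pow_left₀ hσ₂0.le h1 2
    rwa [hexp α t] at h2
  -- orthogonality of the images
  have hb : b = 0 := by
    by_contra hbne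
    have hbpos : 0 < |b| := abs_pos.2 hbne
    obtain ⟨K, hKdef⟩ : ∃ K : ℝ, K = F ^ 2 - (‖N‖⁻¹) ^ 2 := ⟨_, rfl⟩
    have hK0 : 0 ≤ K := by
      have := pow_le_pow_left₀ hσ₂0.le hσ₂F 2
      simp only [hKdef]; linarith
    obtain ⟨ε, hεdef⟩ : ∃ e : ℝ, e = min (1/2) (|b| / (K + 1)) := ⟨_, rfl⟩
    have hK1 : (0:ℝ) < K + 1 := by linarith
    have hε0 : 0 < ε := hεdef ▸ lt_min (by norm_num) (div_pos hbpos hK1)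
    have hehalf : ε ≤ 1/2 := hεdef ▸ min_le_left _ _
    have hεK : ε ≤ |b| / (K + 1) := hεdef ▸ min_le_right _ _
    obtain ⟨α, hαdef⟩ : ∃ a : ℝ, a = Real.sqrt (1 - ε ^ 2) := ⟨_, rfl⟩
    have hε2 : ε ^ 2 ≤ (1/2 : ℝ) ^ 2 := pow_le_pow_left₀ hε0.le hehalf 2
    have h34 : (1:ℝ)/4 ≤ 1 - ε ^ 2 := by norm_num at hε2 ⊢; linarith
    have hα2 : α ^ 2 = 1 - ε ^ 2 := by rw [hαdef]; exact Real.sq_sqrt (by linarith)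
    have hahalf : 1/2 ≤ α := by
      calc (1:ℝ)/2 = Real.sqrt (1/4) := by
            rw [show (1:ℝ)/4 = (1/2)^2 by norm_num, Real.sqrt_sq (by norm_num)]
        _ ≤ α := hαdef ▸ Real.sqrt_le_sqrt h34
    obtain ⟨t, htdef⟩ : ∃ t : ℝ, t = if 0 < b then -ε else ε := ⟨_, rfl⟩
    have ht2 : t ^ 2 = ε ^ 2 := by
      rw [htdef]; split <;> ring
    have htb : t * b = -(ε * |b|) := by
      rw [htdef]
      rcases lt_or_gt_of_ne hbne with h | h
      · rw [if_neg (not_lt.2 h.le), abs_of_neg h]; ring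
      · rw [if_pos h, abs_of_pos h]; ring
    have h1 := hkey α t (by rw [hα2, ht2]; ring)
    rw [hα2, ht2] at h1
    have htab : 2 * (α * t) * b = -(2 * α * (ε * |b|)) := by
      have : α * t * b = α * (t * b) := mul_assoc _ _ _
      rw [mul_assoc, mul_assoc, htb]; ring
    rw [htab] at h1
    have hKmul : ε ^ 2 * K = ε ^ 2 * F ^ 2 - ε ^ 2 * (‖N‖⁻¹) ^ 2 := by
      rw [hKdef]; ring
    have h2 : 2 * α * (ε * |b|) ≤ ε ^ 2 * K := by linarith [h1, hKmul]
    have h3 : 2 * α * |b| ≤ ε * K := by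
      have := mul_le_mul_of_nonneg_right h2 (inv_pos.2 hε0).le
      calc 2 * α * |b| = 2 * α * (ε * |b|) * ε⁻¹ := by
            field_simp
          _ ≤ ε ^ 2 * K * ε⁻¹ := this
          _ = ε * K := by field_simp
    have h4a : (1/2) * |b| ≤ α * |b| := mul_le_mul_of_nonneg_right hahalf (abs_nonneg b)
    have h4 : |b| ≤ ε * K := by linarith [h3, h4a]
    have h5 : ε * K < |b| := by
      calc ε * K ≤ |b| / (K + 1) * K := mul_le_mul_of_nonneg_right hεK hK0
        _ < |b| := by
            rw [div_mul_eq_mul_div, div_lt_iff₀ hK1]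
            exact mul_lt_mul_of_pos_left (lt_add_one K) hbpos
    linarith
  -- spanning: {eBA, f} spans E2
  have hspan : Submodule.span ℝ ({eBA, f} : Set E2) = ⊤ := by
    set g : Fin 2 → E2 := ![eBA, f] with hgdef
    have i00 : ⟪eBA, eBA⟫_ℝ = 1 := by
      rw [real_inner_self_eq_norm_sq, heBA]; norm_num
    have i11 : ⟪f, f⟫_ℝ = 1 := by
      rw [real_inner_self_eq_norm_sq, hnf]; norm_num
    have i10 : ⟪f, eBA⟫_ℝ = 0 := by rw [real_inner_comm]; exact horth
    have hon : Orthonormal ℝ g := by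
      rw [orthonormal_iff_ite]
      intro i j
      fin_cases i <;> fin_cases j <;>
        simp only [hgdef, Matrix.cons_val_zero, Matrix.cons_val_one, Matrix.head_cons] <;>
        norm_num [i00, i11, i10, horth, heBA, hnf]
    have hli := hon.linearIndependent
    have hcard : Fintype.card (Fin 2) = Module.finrank ℝ (EuclideanSpace ℝ (Fin 2)) := by
      simp [finrank_euclideanSpace]
    have htop := hli.span_eq_top_of_card_eq_finrank hcard
    have hrange : Set.range g = ({eBA, f} : Set E2) := by
      ext x
      simp [hgdef, Matrix.range_cons, Matrix.range_empty, or_comm]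
    rwa [hrange] at htop
  have hF : ‖M‖ ≤ F := by
    refine ContinuousLinearMap.opNorm_le_bound _ (norm_nonneg _) (fun x => ?_)
    have hx : x ∈ Submodule.span ℝ ({eBA, f} : Set E2) := by
      rw [hspan]; trivial
    obtain ⟨a, b', hab⟩ := Submodule.mem_span_pair.1 hx
    have hxnorm : ‖x‖ ^ 2 = a ^ 2 + b' ^ 2 := by
      rw [← hab, norm_add_sq_real, real_inner_smul_left, real_inner_smul_right,
        norm_smul, norm_smul, heBA, hnf, Real.norm_eq_abs, Real.norm_eq_abs,
        mul_pow, mul_pow, sq_abs, sq_abs, horth]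
      ring
    have hMx : ‖M x‖ ^ 2 = a ^ 2 * (‖N‖⁻¹) ^ 2 + b' ^ 2 * F ^ 2 := by
      rw [← hab]
      rw [hexp a b', hb]
      ring
    have hsq : ‖M x‖ ^ 2 ≤ (F * ‖x‖) ^ 2 := by
      have hFσ : (‖N‖⁻¹) ^ 2 ≤ F ^ 2 := pow_le_pow_left₀ hσ₂0.le hσ₂F 2
      have h1 : a ^ 2 * (‖N‖⁻¹) ^ 2 ≤ a ^ 2 * F ^ 2 :=
        mul_le_mul_of_nonneg_left hFσ (sq_nonneg a)
      have h2 : F ^ 2 * (a ^ 2 + b' ^ 2) = a ^ 2 * F ^ 2 + b' ^ 2 * F ^ 2 := by ring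
      rw [hMx, mul_pow, hxnorm]
      linarith
    have := Real.sqrt_le_sqrt hsq
    rwa [Real.sqrt_sq (norm_nonneg _), Real.sqrt_sq (by positivity)] at this
  have hFM : F = ‖M‖ := by
    refine le_antisymm ?_ hF
    have := M.le_opNorm f
    rwa [hnf, mul_one] at this
  -- the exact singular value decomposition formula
  have hformula : m ^ 2 = c ^ 2 * (‖N‖⁻¹) ^ 2 + s ^ 2 * ‖M‖ ^ 2 := by
    have h1 : m ^ 2 = ‖M (c • eBA + s • f)‖ ^ 2 := by rw [← heAdec]
    rw [h1, hexp c s, hb, hFM]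
    ring
  -- algebra
  have hm2 : 2 * m ^ 2 ≤ ‖M‖ ^ 2 := by
    have h1 : m * Real.sqrt 2 ≤ ‖M‖ := by
      rw [← le_div_iff₀ hsqrt2]; exact hsmall
    have h2 : (m * Real.sqrt 2) ^ 2 ≤ ‖M‖ ^ 2 :=
      pow_le_pow_left₀ (by positivity) h1 2
    rw [mul_pow, Real.sq_sqrt (by norm_num : (0:ℝ) ≤ 2)] at h2
    linarith
  have hσ₂m2 : (‖N‖⁻¹) ^ 2 ≤ m ^ 2 := pow_le_pow_left₀ hσ₂0.le hσ₂m 2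
  have hM2pos : (0:ℝ) < ‖M‖ ^ 2 := pow_pos hM0 2
  have hzx : c ^ 2 * (‖M‖ ^ 2 - (‖N‖⁻¹) ^ 2) = ‖M‖ ^ 2 - m ^ 2 := by
    linear_combination hformula + ‖M‖ ^ 2 * hs2
  have hxpos : (0:ℝ) < ‖M‖ ^ 2 - (‖N‖⁻¹) ^ 2 := by linarith [hσ₂m2, hm2]
  have hc2 : 1/2 ≤ c ^ 2 := by
    refine aux_half_le hzx hxpos ?_
    have := sq_nonneg (‖N‖⁻¹)
    linarith [hm2]
  have hs2σ : s ^ 2 * ‖M‖ ^ 2 ≤ m ^ 2 := by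
    have h1 : 0 ≤ c ^ 2 * (‖N‖⁻¹) ^ 2 := mul_nonneg (sq_nonneg c) (sq_nonneg _)
    linarith [hformula]
  rw [htan, div_le_div_iff₀ hc hM0]
  -- goal : s * ‖M‖ ≤ √2 * m * c
  have hsq : (s * ‖M‖) ^ 2 ≤ (Real.sqrt 2 * m * c) ^ 2 := by
    have h2 : (Real.sqrt 2 * m * c) ^ 2 = 2 * m ^ 2 * c ^ 2 := by
      rw [mul_pow, mul_pow, Real.sq_sqrt (by norm_num : (0:ℝ) ≤ 2)]
    have h3 : m ^ 2 ≤ 2 * m ^ 2 * c ^ 2 := aux_double (sq_nonneg m) hc2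
    rw [h2, mul_pow]
    linarith [hs2σ]
  have := Real.sqrt_le_sqrt hsq
  rwa [Real.sqrt_sq (by positivity), Real.sqrt_sq (by positivity)] at this
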